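/- Let $R$ be a Dedekind domain of characteristic $0$ with fraction field $F$, fix an algebraic closure $F^c$ of $F$, and let $\Gamma$ be a finite abelian group. For $x \in F^c[\Gamma]$ define $x_\rho \in F^c$ for each character $\rho: \Gamma \to F^{c,\times}$ by $x = \sum_{\rho} x_\rho e_\rho$ with $e_\rho := |\Gamma|^{-1}\sum_{\gamma\in\Gamma}\rho(\gamma^{-1})\gamma$. Then $x$ belongs to $R[\Gamma]$ if and only if all of the following hold: (1) $x_\rho$ is integral over $R$ (lies in the integral closure $\mathcal{O}_\rho$ of $R$ in $F(\rho)$) for every $\rho$; (2) $\omega(x_\rho) = x_{\omega\circ\rho}$ for every $\rho$ and every $F$-automorphism $\omega$ of $F(\rho)$; and (3) $\sum_{\rho}\rho(\gamma^{-1}) x_\rho \equiv 0 \pmod{|\Gamma|\cdot R}$ for every $\gamma\in\Gamma$ (the sum lies in $F$ by (2) and in $|\Gamma|\cdot R$). -/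

import Mathlib

open scoped BigOperators

universe u

/-- The equivalence between monoid homs from a group into a monoid and homs into its units. -/
def homEquivHomUnits (Γ K : Type*) [Group Γ] [Monoid K] : (Γ →* K) ≃ (Γ →* Kˣ) where
  toFun f := f.toHomUnits
  invFun g := (Units.coeHom K).comp g
  left_inv f := MonoidHom.ext fun _ => rfl
  right_inv g := MonoidHom.ext fun _ => Units.ext rfl

/-- Let `R` be a Dedekind domain of characteristic `0` with fraction field
`F`, let `F^c` be an algebraic closure of `F`, and let `Γ` be a finite abelian group. For
`x ∈ F^c[Γ]` and a character `ρ : Γ → F^{c,×}` let `x_ρ := ∑_γ x_γ ρ(γ)` be the `ρ`-component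
of `x` (so that `x = ∑_ρ x_ρ e_ρ` with `e_ρ = |Γ|⁻¹ ∑_γ ρ(γ⁻¹) γ`). Then `x ∈ R[Γ]` (i.e.
all coefficients of `x` lie in `R`) if and only if: (1) each `x_ρ` lies in the integral
closure `𝒪_ρ` of `R` in `F(ρ)` (it is integral over `R` and lies in the subfield generated
over `F` by the values of `ρ`); (2) `ω(x_ρ) = x_{ω ∘ ρ}` for every `F`-automorphism `ω`;
and (3) for every `γ ∈ Γ`, `∑_ρ ρ(γ⁻¹) x_ρ ≡ 0 (mod |Γ|·R)`. -/
theorem mem_integral_group_ring_iff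
    (R : Type u) [CommRing R] [IsDedekindDomain R] [CharZero R]
    (F : Type u) [Field F] [Algebra R F] [IsFractionRing R F]
    (Fc : Type u) [Field Fc] [Algebra F Fc] [IsAlgClosure F Fc]
    [Algebra R Fc] [IsScalarTower R F Fc]
    (Γ : Type u) [CommGroup Γ] [Fintype Γ]
    (x : MonoidAlgebra Fc Γ)
    (xρ : (Γ →* Fc) → Fc)
    (hxρ : ∀ ρ : Γ →* Fc, xρ ρ = ∑ γ : Γ, x.coeff γ * ρ γ) :
    (∀ γ : Γ, x.coeff γ ∈ (algebraMap R Fc).range) ↔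
      ((∀ ρ : Γ →* Fc, IsIntegral R (xρ ρ) ∧
          xρ ρ ∈ IntermediateField.adjoin F (Set.range fun γ : Γ => ρ γ)) ∧
       (∀ (ρ : Γ →* Fc) (ω : Fc ≃ₐ[F] Fc),
          ω (xρ ρ) = xρ ((ω.toAlgHom.toRingHom.toMonoidHom).comp ρ)) ∧
       (∀ γ : Γ, ∃ r : R,
          ∑ᶠ ρ : Γ →* Fc, ρ γ⁻¹ * xρ ρ =
            (Fintype.card Γ : Fc) * algebraMap R Fc r)) := by
  classical
  haveI : IsAlgClosed Fc := IsAlgClosure.isAlgClosed F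
  haveI : CharZero F := charZero_of_injective_algebraMap (IsFractionRing.injective R F)
  haveI : CharZero Fc := charZero_of_injective_algebraMap (algebraMap F Fc).injective
  haveI : NeZero ((Monoid.exponent Γ : Fc)) :=
    ⟨Nat.cast_ne_zero.mpr (Monoid.exponent_ne_zero_of_finite)⟩
  obtain ⟨e⟩ := CommGroup.monoidHom_mulEquiv_of_hasEnoughRootsOfUnity Γ Fc
  haveI : Finite (Γ →* Fcˣ) := Finite.of_equiv Γ e.toEquiv.symm
  haveI : Finite (Γ →* Fc) := Finite.of_equiv _ (homEquivHomUnits Γ Fc).symm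
  haveI : Fintype (Γ →* Fc) := Fintype.ofFinite _
  haveI : Fintype (Γ →* Fcˣ) := Fintype.ofFinite _
  have hcard : Fintype.card (Γ →* Fc) = Fintype.card Γ := by
    rw [Fintype.card_congr (homEquivHomUnits Γ Fc), Fintype.card_congr e.toEquiv]
  -- orthogonality over characters
  have horth : ∀ g : Γ, (∑ ρ : Γ →* Fc, ρ g) =
      if g = 1 then (Fintype.card Γ : Fc) else 0 := by
    intro g
    by_cases hg : g = 1
    · subst hg
      simp [hcard]
    · rw [if_neg hg]
      -- evaluation at g as a hom on the dual group
      let f : (Γ →* Fcˣ) →* Fc :=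
        { toFun := fun ρ => (ρ g : Fc)
          map_one' := rfl
          map_mul' := fun a b => by simp [MonoidHom.mul_apply] }
      have hf : f ≠ 1 := by
        obtain ⟨φ, hφ⟩ := CommGroup.exists_apply_ne_one_of_hasEnoughRootsOfUnity Γ Fc hg
        intro hcon
        apply hφ
        have := congrArg (fun ψ => ψ φ) hcon
        simpa [f] using Units.ext this
      have h0 : (∑ ρ : Γ →* Fcˣ, f ρ) = 0 := sum_hom_units_eq_zero f hf
      rw [← h0]
      exact Fintype.sum_equiv (homEquivHomUnits Γ Fc) _ _ (fun ρ => rfl)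
  -- key inversion identity
  have key : ∀ γ : Γ, (∑ᶠ ρ : Γ →* Fc, ρ γ⁻¹ * xρ ρ) = (Fintype.card Γ : Fc) * x.coeff γ := by
    intro γ
    rw [finsum_eq_sum_of_fintype]
    have : ∀ ρ : Γ →* Fc, ρ γ⁻¹ * xρ ρ = ∑ δ : Γ, x.coeff δ * ρ (γ⁻¹ * δ) := by
      intro ρ
      rw [hxρ, Finset.mul_sum]
      refine Finset.sum_congr rfl fun δ _ => ?_
      rw [map_mul]; ring
    simp_rw [this]
    rw [Finset.sum_comm]
    have : ∀ δ : Γ, (∑ ρ : Γ →* Fc, x.coeff δ * ρ (γ⁻¹ * δ)) =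
        x.coeff δ * (if δ = γ then (Fintype.card Γ : Fc) else 0) := by
      intro δ
      rw [← Finset.mul_sum, horth]
      congr 2
      simp [inv_mul_eq_one, eq_comm]
    simp_rw [this]
    simp [mul_comm]
  have hcard0 : ((Fintype.card Γ : Fc)) ≠ 0 := Nat.cast_ne_zero.mpr Fintype.card_ne_zero
  constructor
  · intro h
    refine ⟨?_, ?_, ?_⟩
    · intro ρ
      constructor
      · rw [hxρ]
        refine IsIntegral.sum _ fun γ _ => IsIntegral.mul ?_ ?_
        · obtain ⟨r, hr⟩ := h γ
          exact hr ▸ isIntegral_algebraMap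
        · refine ⟨Polynomial.X ^ (Fintype.card Γ) - 1, ?_, ?_⟩
          · simpa using Polynomial.monic_X_pow_sub_C (1 : R) Fintype.card_ne_zero
          · have : (ρ γ) ^ (Fintype.card Γ) = 1 := by
              rw [← map_pow, pow_card_eq_one, map_one]
            simp [Polynomial.eval₂_sub, this]
      · rw [hxρ]
        refine Subalgebra.sum_mem _ fun γ _ => mul_mem ?_ ?_
        · obtain ⟨r, hr⟩ := h γ
          rw [← hr, IsScalarTower.algebraMap_apply R F Fc]
          exact (IntermediateField.adjoin F _).algebraMap_mem _
        · exact IntermediateField.subset_adjoin F _ ⟨γ, rfl⟩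
    · intro ρ ω
      rw [hxρ, hxρ, map_sum]
      refine Finset.sum_congr rfl fun γ _ => ?_
      rw [map_mul]
      congr 1
      obtain ⟨r, hr⟩ := h γ
      rw [← hr, IsScalarTower.algebraMap_apply R F Fc, AlgEquiv.commutes]
    · intro γ
      obtain ⟨r, hr⟩ := h γ
      exact ⟨r, by rw [key γ, hr]⟩
  · rintro ⟨-, -, h3⟩ γ
    obtain ⟨r, hr⟩ := h3 γ
    rw [key γ] at hr
    exact ⟨r, (mul_left_cancel₀ hcard0 hr).symm⟩
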